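/- arXiv:1609.01323 — 6 statements merged into one kernel-verified Lean document; each statement's English description precedes it below -/
import Mathlib

section
/- If a graph G cellularly embedded in the torus, with r vertices and 2r edges, has the Angle property (there exist positive angle weights at the corners of faces summing to 1 around each vertex and summing to 1 around each face), then for every nonempty proper subset J of the faces, the number of interior vertices of G(J) is strictly less than |J|, which is strictly less than the number of vertices of G(J). -/
/-- A combinatorial model of a connected loopless multigraph, cellularly embedded in the
torus, with `r` vertices, `2r` edges and `r` faces.  The embedding is recorded through
its facial walks: face `f` has a closed boundary walk of length `len f`, whose `i`-th
vertex is `wv f i` and `i`-th edge is `we f i` (indices taken cyclically), the edge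
`we f i` joining `wv f i` to `wv f (i+1)`.  Every edge is traversed exactly twice in
total by the facial walks. -/
structure TorusGraph (r : ℕ) (V E F : Type) [Fintype V] [Fintype E] [Fintype F]
    [DecidableEq V] [DecidableEq E] [DecidableEq F] where
  ends : E → Sym2 V
  len : F → ℕ
  len_pos : ∀ f, 0 < len f
  wv : F → ℕ → V
  we : F → ℕ → E
  wv_periodic : ∀ f i, wv f (i + len f) = wv f i
  we_periodic : ∀ f i, we f (i + len f) = we f i
  walk_ends : ∀ f i, ends (we f i) = s(wv f i, wv f (i + 1))
  loopless : ∀ e, ¬ (ends e).IsDiag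
  card_V : Fintype.card V = r
  card_E : Fintype.card E = 2 * r
  card_F : Fintype.card F = r
  edge_twice : ∀ e : E,
    ∑ f : F, ((Finset.range (len f)).filter (fun i => we f i = e)).card = 2
  connected : (SimpleGraph.fromRel (fun u v => ∃ e, ends e = s(u, v))).Connected

namespace TorusGraph

variable {r : ℕ} {V E F : Type} [Fintype V] [Fintype E] [Fintype F]
    [DecidableEq V] [DecidableEq E] [DecidableEq F]

/-- The set of vertices on the boundary of face `f`. -/
def faceVerts (G : TorusGraph r V E F) (f : F) : Finset V :=
  (Finset.range (G.len f)).image (G.wv f)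

/-- `V(G(J))`: the vertices of the subgraph generated by the faces in `J`. -/
def VJ (G : TorusGraph r V E F) (J : Finset F) : Finset V :=
  J.biUnion G.faceVerts

/-- `Int G(J)`: vertices incident only with faces labelled by `J`. -/
def IntJ (G : TorusGraph r V E F) (J : Finset F) : Finset V :=
  (G.VJ J).filter (fun v => ∀ f : F, v ∈ G.faceVerts f → f ∈ J)

/-- The **Angle property**: there are positive weights on the corners
(positions of the facial walks) summing to `1` within each face and to `1`
around each vertex. -/
def AngleProp (G : TorusGraph r V E F) : Prop :=
  ∃ ω : F → ℕ → ℝ,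
    (∀ f, ∀ i ∈ Finset.range (G.len f), 0 < ω f i) ∧
    (∀ f, ∑ i ∈ Finset.range (G.len f), ω f i = 1) ∧
    (∀ v : V, ∑ f : F,
        ∑ i ∈ (Finset.range (G.len f)).filter (fun i => G.wv f i = v), ω f i = 1)

/-- The **Euler property**: every facial walk traverses each boundary edge
exactly once (it is an Euler trail of the boundary subgraph). -/
def EulerProp (G : TorusGraph r V E F) : Prop :=
  ∀ f, ∀ i < G.len f, ∀ j < G.len f, G.we f i = G.we f j → i = j

/-! ### Auxiliary lemmas -/

lemma wv_mem_faceVerts (G : TorusGraph r V E F) (f : F) {i : ℕ} (hi : i < G.len f) :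
    G.wv f i ∈ G.faceVerts f :=
  Finset.mem_image_of_mem _ (Finset.mem_range.2 hi)

lemma wv_succ_mem_faceVerts (G : TorusGraph r V E F) (f : F) {i : ℕ} (hi : i < G.len f) :
    G.wv f (i + 1) ∈ G.faceVerts f := by
  rcases lt_or_eq_of_le (Nat.succ_le_of_lt hi) with h | h
  · exact G.wv_mem_faceVerts f h
  · have h0 : G.wv f (i + 1) = G.wv f 0 := by
      rw [show i + 1 = G.len f from h]; simpa using G.wv_periodic f 0
    rw [h0]
    exact G.wv_mem_faceVerts f (G.len_pos f)

lemma exists_traversal (G : TorusGraph r V E F) (e : E) :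
    ∃ f, ∃ i < G.len f, G.we f i = e := by
  by_contra h
  push_neg at h
  have h2 := G.edge_twice e
  have hz : ∀ f : F, ((Finset.range (G.len f)).filter (fun i => G.we f i = e)).card = 0 := by
    intro f
    rw [Finset.card_eq_zero, Finset.filter_eq_empty_iff]
    intro i hi
    exact h f i (Finset.mem_range.1 hi)
  rw [Finset.sum_congr rfl (fun f _ => hz f)] at h2
  simp at h2

lemma faceVerts_of_edge (G : TorusGraph r V E F) {e : E} {u v : V}
    (h : G.ends e = s(u, v)) :
    ∃ f, u ∈ G.faceVerts f ∧ v ∈ G.faceVerts f := by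
  obtain ⟨f, i, hi, he⟩ := G.exists_traversal e
  refine ⟨f, ?_⟩
  have hw := G.walk_ends f i
  rw [he, h] at hw
  rcases Sym2.eq_iff.1 hw with ⟨h1, h2⟩ | ⟨h1, h2⟩
  · rw [h1, h2]; exact ⟨G.wv_mem_faceVerts f hi, G.wv_succ_mem_faceVerts f hi⟩
  · rw [h1, h2]; exact ⟨G.wv_succ_mem_faceVerts f hi, G.wv_mem_faceVerts f hi⟩

/-- Since `G` is connected and `J` is a proper subset of the faces, some vertex of
`G(J)` also lies on a face outside `J`. -/
lemma exists_exterior (G : TorusGraph r V E F) {J : Finset F}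
    (hJ : J.Nonempty) (hJne : J ≠ Finset.univ) :
    ∃ v ∈ G.VJ J, ∃ f, f ∉ J ∧ v ∈ G.faceVerts f := by
  by_contra h
  push_neg at h
  have hcl : ∀ v ∈ G.VJ J, ∀ f, v ∈ G.faceVerts f → f ∈ J := by
    intro v hv f hvf
    by_contra hf
    exact h v hv f hf hvf
  obtain ⟨f₁, hf₁⟩ := hJ
  have hv₀ : G.wv f₁ 0 ∈ G.VJ J :=
    Finset.mem_biUnion.2 ⟨f₁, hf₁, G.wv_mem_faceVerts f₁ (G.len_pos f₁)⟩
  have key : ∀ {a b : V},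
      (SimpleGraph.fromRel (fun u v => ∃ e, G.ends e = s(u, v))).Walk a b →
      a ∈ G.VJ J → b ∈ G.VJ J := by
    intro a b w
    induction w with
    | nil => exact id
    | @cons a c b hadj _ ih =>
      intro ha
      apply ih
      have hec : ∃ e, G.ends e = s(a, c) := by
        rcases hadj with ⟨_, ⟨e, he⟩ | ⟨e, he⟩⟩
        · exact ⟨e, he⟩
        · exact ⟨e, by rw [he, Sym2.eq_swap]⟩
      obtain ⟨e, he⟩ := hec
      obtain ⟨f, haf, hcf⟩ := G.faceVerts_of_edge he
      exact Finset.mem_biUnion.2 ⟨f, hcl a ha f haf, hcf⟩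
  have hall : ∀ v : V, v ∈ G.VJ J := fun v =>
    ((G.connected.preconnected (G.wv f₁ 0) v)).elim fun w => key w hv₀
  obtain ⟨f₂, hf₂⟩ : ∃ f, f ∉ J := by
    by_contra hc
    push_neg at hc
    exact hJne (Finset.eq_univ_iff_forall.2 hc)
  have : G.wv f₂ 0 ∈ G.faceVerts f₂ := G.wv_mem_faceVerts f₂ (G.len_pos f₂)
  exact hf₂ (hcl _ (hall _) f₂ this)

end TorusGraph

open TorusGraph in
/-- If a cellularly embedded toroidal graph with `r` vertices and `2r` edges has the
Angle property, then for every nonempty proper subset `J` of faces,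
`|Int G(J)| < |J| < |V(G(J))|`. -/
theorem angle_implies_hall {r : ℕ} {V E F : Type} [Fintype V] [Fintype E] [Fintype F]
    [DecidableEq V] [DecidableEq E] [DecidableEq F]
    (G : TorusGraph r V E F) (hA : G.AngleProp) :
    ∀ J : Finset F, J.Nonempty → J ≠ Finset.univ →
      (G.IntJ J).card < J.card ∧ J.card < (G.VJ J).card := by
  obtain ⟨ω, hpos, hface, hvert⟩ := hA
  intro J hJ hJne
  set T : F → V → ℝ :=
    fun f v => ∑ i ∈ (Finset.range (G.len f)).filter (fun i => G.wv f i = v), ω f i with hT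
  have hvertT : ∀ v : V, ∑ f : F, T f v = 1 := fun v => hvert v
  have hTnonneg : ∀ f v, 0 ≤ T f v := fun f v =>
    Finset.sum_nonneg fun i hi => le_of_lt (hpos f i (Finset.mem_filter.1 hi).1)
  have hTpos : ∀ f v, v ∈ G.faceVerts f → 0 < T f v := by
    intro f v hv
    obtain ⟨i, hi, hwi⟩ := Finset.mem_image.1 hv
    exact Finset.sum_pos'
      (fun j hj => le_of_lt (hpos f j (Finset.mem_filter.1 hj).1))
      ⟨i, Finset.mem_filter.2 ⟨hi, hwi⟩, hpos f i hi⟩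
  have hTzero : ∀ f v, v ∉ G.faceVerts f → T f v = 0 := by
    intro f v hv
    apply Finset.sum_eq_zero
    intro i hi
    exact absurd
      (Finset.mem_image.2 ⟨i, (Finset.mem_filter.1 hi).1, (Finset.mem_filter.1 hi).2⟩) hv
  -- total mass of `J` distributed over `V(G(J))`
  have hsum : ∑ v ∈ G.VJ J, (∑ f ∈ J, T f v) = (J.card : ℝ) := by
    rw [Finset.sum_comm]
    have hfiber : ∀ f ∈ J, ∑ v ∈ G.VJ J, T f v = 1 := by
      intro f hf
      have hmaps : ∀ i ∈ Finset.range (G.len f), G.wv f i ∈ G.VJ J := fun i hi =>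
        Finset.mem_biUnion.2 ⟨f, hf, G.wv_mem_faceVerts f (Finset.mem_range.1 hi)⟩
      calc ∑ v ∈ G.VJ J, T f v
          = ∑ i ∈ Finset.range (G.len f), ω f i :=
            Finset.sum_fiberwise_of_maps_to hmaps _
        _ = 1 := hface f
    rw [Finset.sum_congr rfl hfiber]
    simp
  have hs_le : ∀ v : V, ∑ f ∈ J, T f v ≤ 1 := by
    intro v
    rw [← hvertT v]
    exact Finset.sum_le_sum_of_subset_of_nonneg (Finset.subset_univ J)
      (fun f _ _ => hTnonneg f v)
  have hs_int : ∀ v ∈ G.IntJ J, ∑ f ∈ J, T f v = 1 := by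
    intro v hv
    obtain ⟨hvJ, hint⟩ := Finset.mem_filter.1 hv
    rw [← hvertT v]
    exact Finset.sum_subset (Finset.subset_univ J)
      (fun f _ hf => hTzero f v fun hmem => hf (hint f hmem))
  -- an exterior vertex of `V(G(J))`
  obtain ⟨v₀, hv₀VJ, f₀, hf₀J, hv₀f₀⟩ := G.exists_exterior hJ hJne
  have hv₀notInt : v₀ ∉ G.IntJ J := fun h =>
    hf₀J ((Finset.mem_filter.1 h).2 f₀ hv₀f₀)
  have hs_v₀_pos : 0 < ∑ f ∈ J, T f v₀ := by
    obtain ⟨f₁, hf₁, hv₀f₁⟩ := Finset.mem_biUnion.1 hv₀VJ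
    exact Finset.sum_pos' (fun f _ => hTnonneg f v₀) ⟨f₁, hf₁, hTpos f₁ v₀ hv₀f₁⟩
  have hs_v₀_lt : ∑ f ∈ J, T f v₀ < 1 := by
    rw [← hvertT v₀]
    exact Finset.sum_lt_sum_of_subset (Finset.subset_univ J) (Finset.mem_univ f₀)
      hf₀J (hTpos f₀ v₀ hv₀f₀) (fun f _ _ => hTnonneg f v₀)
  -- first inequality
  have h1 : ((G.IntJ J).card : ℝ) < ∑ v ∈ G.VJ J, ∑ f ∈ J, T f v := by
    have hcard : ((G.IntJ J).card : ℝ) = ∑ v ∈ G.IntJ J, ∑ f ∈ J, T f v := by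
      rw [Finset.sum_congr rfl hs_int]; simp
    rw [hcard]
    exact Finset.sum_lt_sum_of_subset (Finset.filter_subset _ _) hv₀VJ hv₀notInt
      hs_v₀_pos (fun v _ _ => Finset.sum_nonneg fun f _ => hTnonneg f v)
  -- second inequality
  have h2 : ∑ v ∈ G.VJ J, ∑ f ∈ J, T f v < ((G.VJ J).card : ℝ) := by
    have := Finset.sum_lt_sum (f := fun v => ∑ f ∈ J, T f v) (g := fun _ => (1 : ℝ))
      (fun v _ => hs_le v) ⟨v₀, hv₀VJ, hs_v₀_lt⟩
    simpa using this
  rw [hsum] at h1 h2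
  exact ⟨by exact_mod_cast h1, by exact_mod_cast h2⟩
end

section
/- Let G be a connected cellularly embedded toroidal graph with r vertices and r faces such that for every nonempty proper subset J of faces, |J| < |V(G(J))|. Then for any vertex v₀ and any face F₀ incident with v₀, the assignment v₀ ↦ F₀ extends to a bijection T from the vertex set of G to the face set of G such that each vertex v is incident with the face T(v). -/
open TorusGraph in
/-- If for every nonempty proper subset `J` of faces `|J| < |V(G(J))|`, then any
assignment of a vertex `v₀` to an incident face `f₀` extends to a bijection `T`
from vertices to faces with every vertex `v` incident with `T v`. -/
theorem hall_transversal {r : ℕ} {V E F : Type} [Fintype V] [Fintype E] [Fintype F]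
    [DecidableEq V] [DecidableEq E] [DecidableEq F]
    (G : TorusGraph r V E F)
    (hH : ∀ J : Finset F, J.Nonempty → J ≠ Finset.univ → J.card < (G.VJ J).card)
    (v₀ : V) (f₀ : F) (h₀ : v₀ ∈ G.faceVerts f₀) :
    ∃ T : V ≃ F, T v₀ = f₀ ∧ ∀ v : V, v ∈ G.faceVerts (T v) := by
  classical
  set t : F → Finset V := fun f => if f = f₀ then {v₀} else (G.faceVerts f).erase v₀ with ht
  have hbi : ∀ s : Finset F, f₀ ∉ s →
      s.biUnion t = (G.VJ s).erase v₀ := by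
    intro s hs
    ext x
    simp only [Finset.mem_biUnion, Finset.mem_erase, VJ, ht]
    constructor
    · rintro ⟨f, hf, hx⟩
      have hne : f ≠ f₀ := fun h => hs (h ▸ hf)
      simp only [if_neg hne, Finset.mem_erase] at hx
      exact ⟨hx.1, ⟨f, hf, hx.2⟩⟩
    · rintro ⟨hx, f, hf, hxf⟩
      have hne : f ≠ f₀ := fun h => hs (h ▸ hf)
      exact ⟨f, hf, by simp [if_neg hne, Finset.mem_erase, hx, hxf]⟩
  have hall : ∀ s : Finset F, s.card ≤ (s.biUnion t).card := by
    intro s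
    rcases s.eq_empty_or_nonempty with rfl | hsne
    · simp
    by_cases hf₀ : f₀ ∈ s
    · -- split off f₀
      have hs : s = insert f₀ (s.erase f₀) := (Finset.insert_erase hf₀).symm
      set s' := s.erase f₀ with hs'
      have hfs' : f₀ ∉ s' := Finset.notMem_erase _ _
      have hbi' : s.biUnion t = insert v₀ ((G.VJ s').erase v₀) := by
        conv_lhs => rw [hs]
        rw [Finset.biUnion_insert, hbi s' hfs']
        rw [show t f₀ = {v₀} by simp [ht], ← Finset.insert_eq]
      rw [hbi', Finset.card_insert_of_notMem (Finset.notMem_erase _ _)]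
      rcases s'.eq_empty_or_nonempty with h' | h'
      · have : s.card = 1 := by
          rw [hs, h']; simp
        omega
      · have hne : s' ≠ Finset.univ := fun h => hfs' (h ▸ Finset.mem_univ f₀)
        have h1 := hH s' h' hne
        have h2 : (G.VJ s').card - 1 ≤ ((G.VJ s').erase v₀).card :=
          Finset.pred_card_le_card_erase
        have h3 : s.card = s'.card + 1 := by
          rw [hs, Finset.card_insert_of_notMem hfs']
        omega
    · have hne : s ≠ Finset.univ := fun h => hf₀ (h ▸ Finset.mem_univ f₀)
      have h1 := hH s hsne hne
      rw [hbi s hf₀]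
      have h2 : (G.VJ s).card - 1 ≤ ((G.VJ s).erase v₀).card :=
        Finset.pred_card_le_card_erase
      omega
  obtain ⟨g, hginj, hgt⟩ := (Finset.all_card_le_biUnion_card_iff_exists_injective t).mp hall
  have hgbij : Function.Bijective g := by
    have : Fintype.card F = Fintype.card V := by rw [G.card_F, G.card_V]
    exact (Fintype.bijective_iff_injective_and_card g).mpr ⟨hginj, this⟩
  have hg₀ : g f₀ = v₀ := by
    have := hgt f₀
    simpa [ht] using this
  have hgf : ∀ f, g f ∈ G.faceVerts f := by
    intro f
    have := hgt f
    by_cases h : f = f₀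
    · subst h; rw [hg₀]; exact h₀
    · simp only [ht, if_neg h] at this
      exact Finset.mem_of_mem_erase this
  refine ⟨(Equiv.ofBijective g hgbij).symm, ?_, ?_⟩
  · rw [← hg₀]
    exact (Equiv.ofBijective g hgbij).symm_apply_apply f₀
  · intro v
    have : g ((Equiv.ofBijective g hgbij).symm v) = v :=
      (Equiv.ofBijective g hgbij).apply_symm_apply v
    have h := hgf ((Equiv.ofBijective g hgbij).symm v)
    rwa [this] at h
end

section
/- A connected cellularly embedded toroidal multigraph G with r vertices, 2r edges and r faces has the Angle property if and only if the Hall condition |J| < |V(G(J))| holds for every nonempty proper subset J of the set of faces. -/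
namespace TorusGraph

variable {r : ℕ} {V E F : Type} [Fintype V] [Fintype E] [Fintype F]
    [DecidableEq V] [DecidableEq E] [DecidableEq F] (G : TorusGraph r V E F)

private lemma wv_mod (f : F) (i : ℕ) : G.wv f i = G.wv f (i % G.len f) := by
  induction i using Nat.strong_induction_on with
  | _ i ih =>
    rcases lt_or_ge i (G.len f) with h | h
    · rw [Nat.mod_eq_of_lt h]
    · have hp := G.len_pos f
      calc G.wv f i = G.wv f ((i - G.len f) + G.len f) := by rw [Nat.sub_add_cancel h]
        _ = G.wv f (i - G.len f) := G.wv_periodic f _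
        _ = G.wv f ((i - G.len f) % G.len f) := ih _ (by omega)
        _ = G.wv f (i % G.len f) := by rw [← Nat.mod_eq_sub_mod h]

private lemma wv_mem_faceVerts_s7 (f : F) (i : ℕ) : G.wv f i ∈ G.faceVerts f := by
  rw [wv_mod]
  exact Finset.mem_image_of_mem _ (Finset.mem_range.2 (Nat.mod_lt _ (G.len_pos f)))

private lemma nonemptyV (G : TorusGraph r V E F) : Nonempty V := G.connected.nonempty

private lemma nonemptyF (G : TorusGraph r V E F) : Nonempty F := by
  have h1 : 0 < Fintype.card V := Fintype.card_pos_iff.2 G.nonemptyV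
  have h2 : 0 < Fintype.card F := by rw [G.card_F, ← G.card_V]; exact h1
  exact Fintype.card_pos_iff.1 h2

private lemma exists_face_of_edge (e : E) : ∃ f i, i < G.len f ∧ G.we f i = e := by
  by_contra h
  push_neg at h
  have h2 := G.edge_twice e
  rw [Finset.sum_eq_zero] at h2
  · exact absurd h2 (by norm_num)
  · intro f _
    rw [Finset.card_eq_zero, Finset.filter_eq_empty_iff]
    intro i hi
    exact h f i (Finset.mem_range.1 hi)

private lemma adj_common_face {u v : V} (e : E) (h : G.ends e = s(u, v)) :
    ∃ f, u ∈ G.faceVerts f ∧ v ∈ G.faceVerts f := by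
  obtain ⟨f, i, hi, he⟩ := G.exists_face_of_edge e
  have hw := G.walk_ends f i
  rw [he, h] at hw
  rw [Sym2.eq_iff] at hw
  rcases hw with ⟨h1, h2⟩ | ⟨h1, h2⟩
  · exact ⟨f, h1 ▸ G.wv_mem_faceVerts_s7 f i, h2 ▸ G.wv_mem_faceVerts_s7 f _⟩
  · exact ⟨f, h1 ▸ G.wv_mem_faceVerts_s7 f _, h2 ▸ G.wv_mem_faceVerts_s7 f i⟩

private lemma adj_face {u v : V}
    (h : (SimpleGraph.fromRel (fun u v => ∃ e, G.ends e = s(u, v))).Adj u v) :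
    ∃ f, u ∈ G.faceVerts f ∧ v ∈ G.faceVerts f := by
  rw [SimpleGraph.fromRel_adj] at h
  rcases h with ⟨-, ⟨e, he⟩ | ⟨e, he⟩⟩
  · exact G.adj_common_face e he
  · obtain ⟨f, h1, h2⟩ := G.adj_common_face e he
    exact ⟨f, h2, h1⟩

private lemma walk_cross {α : Type} {G' : SimpleGraph α} {S : Finset α} :
    ∀ {u w : α}, G'.Walk u w → u ∈ S → w ∉ S → ∃ a b, G'.Adj a b ∧ a ∈ S ∧ b ∉ S := by
  intro u w p
  induction p with
  | nil => intro h h'; exact absurd h h'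
  | @cons a b c h p ih =>
    intro hu hw
    by_cases hb : b ∈ S
    · exact ih hb hw
    · exact ⟨a, b, h, hu, hb⟩

private lemma vert_on_face (v : V) : ∃ f, v ∈ G.faceVerts f := by
  obtain ⟨f⟩ := G.nonemptyF
  have hne : G.wv f 0 ≠ G.wv f 1 := by
    intro h
    apply G.loopless (G.we f 0)
    rw [G.walk_ends f 0, Sym2.isDiag_iff_proj_eq]
    exact h
  rcases eq_or_ne v (G.wv f 0) with h | h
  · exact ⟨f, h ▸ G.wv_mem_faceVerts_s7 f 0⟩
  · -- v reachable to wv f 0, take first step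
    obtain ⟨p⟩ := G.connected.preconnected v (G.wv f 0)
    cases p with
    | nil => exact absurd rfl h
    | cons hadj p => exact ⟨(G.adj_face hadj).choose, (G.adj_face hadj).choose_spec.1⟩

private lemma key_boundary {J : Finset F} (hne : J.Nonempty) (hprop : J ≠ Finset.univ) :
    ∃ f, f ∉ J ∧ ∃ i, i < G.len f ∧ G.wv f i ∈ G.VJ J := by
  by_contra h
  push_neg at h
  obtain ⟨f₀, hf₀⟩ := hne
  obtain ⟨f₁, hf₁⟩ : ∃ f, f ∉ J := by
    by_contra h'
    push_neg at h'
    exact hprop (Finset.eq_univ_iff_forall.2 h')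
  have hu : G.wv f₀ 0 ∈ G.VJ J :=
    Finset.mem_biUnion.2 ⟨f₀, hf₀, G.wv_mem_faceVerts_s7 f₀ 0⟩
  have hw : G.wv f₁ 0 ∉ G.VJ J := h f₁ hf₁ 0 (G.len_pos f₁)
  obtain ⟨p⟩ := G.connected.preconnected (G.wv f₀ 0) (G.wv f₁ 0)
  obtain ⟨a, b, hadj, ha, hb⟩ := walk_cross p hu hw
  obtain ⟨f, haf, hbf⟩ := G.adj_face hadj
  by_cases hfJ : f ∈ J
  · exact hb (Finset.mem_biUnion.2 ⟨f, hfJ, hbf⟩)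
  · obtain ⟨i, hi, hwv⟩ := Finset.mem_image.1 haf
    exact absurd (hwv ▸ ha) (h f hfJ i (Finset.mem_range.1 hi))

end TorusGraph

namespace TorusGraph

variable {r : ℕ} {V E F : Type} [Fintype V] [Fintype E] [Fintype F]
    [DecidableEq V] [DecidableEq E] [DecidableEq F]

/-- For each face `f₀` and vertex `v₀` on it, a perfect matching face → vertex with
`f₀ ↦ v₀`, assuming the Hall condition. -/
private lemma exists_matching (G : TorusGraph r V E F)
    (hHall : ∀ J : Finset F, J.Nonempty → J ≠ Finset.univ → J.card < (G.VJ J).card)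
    (f₀ : F) (v₀ : V) (hv₀ : v₀ ∈ G.faceVerts f₀) :
    ∃ σ : F → V, Function.Bijective σ ∧ (∀ f, σ f ∈ G.faceVerts f) ∧ σ f₀ = v₀ := by
  classical
  set t : F → Finset V := fun f => if f = f₀ then {v₀} else (G.faceVerts f).erase v₀ with ht
  have key : ∀ s : Finset F, f₀ ∉ s →
      s.card ≤ (s.biUnion (fun f => (G.faceVerts f).erase v₀)).card := by
    intro s hf₀
    rcases s.eq_empty_or_nonempty with rfl | hne
    · simp
    have hproper : s ≠ Finset.univ := fun h => hf₀ (h ▸ Finset.mem_univ f₀)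
    have hstrict := hHall s hne hproper
    have heq : s.biUnion (fun f => (G.faceVerts f).erase v₀) = (G.VJ s).erase v₀ := by
      ext u
      simp only [Finset.mem_biUnion, Finset.mem_erase, VJ]
      tauto
    rw [heq]
    have := Finset.pred_card_le_card_erase (s := G.VJ s) (a := v₀)
    omega
  have hall : ∀ s : Finset F, s.card ≤ (s.biUnion t).card := by
    intro s
    by_cases hf : f₀ ∈ s
    · have hsub : insert v₀ ((s.erase f₀).biUnion (fun f => (G.faceVerts f).erase v₀))
          ⊆ s.biUnion t := by
        intro u hu
        rcases Finset.mem_insert.1 hu with rfl | hu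
        · exact Finset.mem_biUnion.2 ⟨f₀, hf, by simp [ht]⟩
        · obtain ⟨f, hfs, hfu⟩ := Finset.mem_biUnion.1 hu
          refine Finset.mem_biUnion.2 ⟨f, Finset.mem_of_mem_erase hfs, ?_⟩
          have : f ≠ f₀ := Finset.ne_of_mem_erase hfs
          simp [ht, this, hfu]
      have hnotmem : v₀ ∉ (s.erase f₀).biUnion (fun f => (G.faceVerts f).erase v₀) := by
        simp [Finset.mem_biUnion]
      have h1 := key (s.erase f₀) (Finset.notMem_erase f₀ s)
      have h2 := Finset.card_le_card hsub
      rw [Finset.card_insert_of_notMem hnotmem] at h2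
      have h3 := Finset.card_erase_of_mem hf
      have h4 : 0 < s.card := Finset.card_pos.2 ⟨f₀, hf⟩
      omega
    · have heq : s.biUnion t = s.biUnion (fun f => (G.faceVerts f).erase v₀) :=
        Finset.biUnion_congr rfl (fun f hfs => by
          have : f ≠ f₀ := fun h => hf (h ▸ hfs)
          simp [ht, this])
      rw [heq]
      exact key s hf
  obtain ⟨σ, hinj, hmem⟩ := (Finset.all_card_le_biUnion_card_iff_exists_injective t).1 hall
  have hσ₀ : σ f₀ = v₀ := by
    have := hmem f₀
    simp [ht] at this
    exact this
  have hface : ∀ f, σ f ∈ G.faceVerts f := by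
    intro f
    have := hmem f
    by_cases h : f = f₀
    · subst h; rw [hσ₀]; exact hv₀
    · simp only [ht, if_neg h] at this
      exact Finset.mem_of_mem_erase this
  refine ⟨σ, ?_, hface, hσ₀⟩
  exact (Fintype.bijective_iff_injective_and_card σ).2 ⟨hinj, G.card_F.trans G.card_V.symm⟩

end TorusGraph

open TorusGraph in
/-- A connected cellularly embedded toroidal multigraph with `r` vertices, `2r`
edges and `r` faces has the Angle property if and only if the Hall condition
`|J| < |V(G(J))|` holds for every nonempty proper subset `J` of faces. -/
theorem angle_iff_hall {r : ℕ} {V E F : Type} [Fintype V] [Fintype E] [Fintype F]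
    [DecidableEq V] [DecidableEq E] [DecidableEq F]
    (G : TorusGraph r V E F) :
    G.AngleProp ↔
      ∀ J : Finset F, J.Nonempty → J ≠ Finset.univ → J.card < (G.VJ J).card := by
  constructor
  · -- Angle ⇒ Hall
    rintro ⟨ω, hpos, hface, hvert⟩ J hne hprop
    obtain ⟨f₂, hf₂J, i₂, hi₂, hv₂⟩ := G.key_boundary hne hprop
    set v₂ := G.wv f₂ i₂ with hv₂def
    set A : V → F → ℝ := fun v f =>
      ∑ i ∈ (Finset.range (G.len f)).filter (fun i => G.wv f i = v), ω f i with hA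
    have hAnn : ∀ v f, 0 ≤ A v f := by
      intro v f
      refine Finset.sum_nonneg fun i hi => le_of_lt (hpos f i (Finset.mem_filter.1 hi).1)
    have hJ : (J.card : ℝ) = ∑ v ∈ G.VJ J, ∑ f ∈ J, A v f := by
      rw [Finset.sum_comm]
      calc (J.card : ℝ) = ∑ _f ∈ J, (1 : ℝ) := by simp
        _ = ∑ f ∈ J, ∑ i ∈ Finset.range (G.len f), ω f i :=
            Finset.sum_congr rfl fun f _ => (hface f).symm
        _ = ∑ f ∈ J, ∑ v ∈ G.VJ J, A v f := by
            refine Finset.sum_congr rfl fun f hf => ?_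
            exact (Finset.sum_fiberwise_of_maps_to
              (fun i _ => Finset.mem_biUnion.2 ⟨f, hf, G.wv_mem_faceVerts_s7 f i⟩) (ω f)).symm
    have hV : ((G.VJ J).card : ℝ) = ∑ v ∈ G.VJ J, ∑ f : F, A v f := by
      calc ((G.VJ J).card : ℝ) = ∑ _v ∈ G.VJ J, (1 : ℝ) := by simp
        _ = _ := Finset.sum_congr rfl fun v _ => (hvert v).symm
    have hlt : (J.card : ℝ) < ((G.VJ J).card : ℝ) := by
      rw [hJ, hV]
      refine Finset.sum_lt_sum
        (fun v _ => Finset.sum_le_sum_of_subset_of_nonneg (Finset.subset_univ J)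
          (fun f _ _ => hAnn v f)) ⟨v₂, hv₂, ?_⟩
      refine Finset.sum_lt_sum_of_subset (Finset.subset_univ J) (Finset.mem_univ f₂) hf₂J ?_
        (fun f _ _ => hAnn v₂ f)
      refine Finset.sum_pos' (fun i hi => le_of_lt (hpos f₂ i (Finset.mem_filter.1 hi).1)) ?_
      exact ⟨i₂, Finset.mem_filter.2 ⟨Finset.mem_range.2 hi₂, rfl⟩,
        hpos f₂ i₂ (Finset.mem_range.2 hi₂)⟩
    exact_mod_cast hlt
  · -- Hall ⇒ Angle
    intro hHall
    classical
    have hex : ∀ c : Σ _ : F, ℕ, ∃ σ : F → V, Function.Bijective σ ∧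
        (∀ f, σ f ∈ G.faceVerts f) ∧ σ c.1 = G.wv c.1 c.2 :=
      fun c => G.exists_matching hHall c.1 (G.wv c.1 c.2) (G.wv_mem_faceVerts_s7 c.1 c.2)
    choose σ hbij hmem hfix using hex
    set ωc : (Σ _ : F, ℕ) → F → ℕ → ℝ := fun c f i =>
      if G.wv f i = σ c f then
        (((Finset.range (G.len f)).filter (fun j => G.wv f j = σ c f)).card : ℝ)⁻¹
      else 0 with hωc
    have hmpos : ∀ c f,
        0 < ((Finset.range (G.len f)).filter (fun j => G.wv f j = σ c f)).card := by
      intro c f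
      obtain ⟨i, hi, hwv⟩ := Finset.mem_image.1 (hmem c f)
      exact Finset.card_pos.2 ⟨i, Finset.mem_filter.2 ⟨hi, hwv⟩⟩
    have hnn : ∀ c f i, 0 ≤ ωc c f i := by
      intro c f i
      simp only [hωc]
      split
      · positivity
      · exact le_refl 0
    have hfs : ∀ c f, ∑ i ∈ Finset.range (G.len f), ωc c f i = 1 := by
      intro c f
      simp only [hωc]
      rw [← Finset.sum_filter, Finset.sum_const, nsmul_eq_mul]
      exact mul_inv_cancel₀ (Nat.cast_ne_zero.2 (hmpos c f).ne')
    have hvs : ∀ c v, ∑ f : F,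
        ∑ i ∈ (Finset.range (G.len f)).filter (fun i => G.wv f i = v), ωc c f i = 1 := by
      intro c v
      have hinner : ∀ f,
          ∑ i ∈ (Finset.range (G.len f)).filter (fun i => G.wv f i = v), ωc c f i
            = if σ c f = v then 1 else 0 := by
        intro f
        by_cases h : σ c f = v
        · rw [if_pos h]
          have hflt : (Finset.range (G.len f)).filter (fun i => G.wv f i = v)
              = (Finset.range (G.len f)).filter (fun j => G.wv f j = σ c f) := by rw [h]
          rw [hflt]
          have hval : ∀ i ∈ (Finset.range (G.len f)).filter (fun j => G.wv f j = σ c f),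
              ωc c f i =
              (((Finset.range (G.len f)).filter (fun j => G.wv f j = σ c f)).card : ℝ)⁻¹ := by
            intro i hi
            simp only [hωc, if_pos (Finset.mem_filter.1 hi).2]
          rw [Finset.sum_congr rfl hval, Finset.sum_const, nsmul_eq_mul]
          exact mul_inv_cancel₀ (Nat.cast_ne_zero.2 (hmpos c f).ne')
        · rw [if_neg h]
          refine Finset.sum_eq_zero fun i hi => ?_
          have hwv := (Finset.mem_filter.1 hi).2
          have hne : G.wv f i ≠ σ c f := by rw [hwv]; exact fun hh => h hh.symm
          simp only [hωc, if_neg hne]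
      rw [Finset.sum_congr rfl (fun f _ => hinner f)]
      set e := Equiv.ofBijective (σ c) (hbij c) with he
      have hcond : ∀ f, (σ c f = v) = (f = e.symm v) := by
        intro f
        apply propext
        constructor
        · intro hh
          apply e.injective
          rw [Equiv.apply_symm_apply]
          rw [he, Equiv.ofBijective_apply]
          exact hh
        · intro hh
          rw [hh]
          have := e.apply_symm_apply v
          rw [he, Equiv.ofBijective_apply] at this
          exact this
      calc ∑ f : F, (if σ c f = v then (1 : ℝ) else 0)
          = ∑ f : F, (if f = e.symm v then (1 : ℝ) else 0) :=
            Finset.sum_congr rfl fun f _ => if_congr (iff_of_eq (hcond f)) rfl rfl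
        _ = 1 := by
            rw [Finset.sum_ite_eq' Finset.univ (e.symm v) (fun _ => (1 : ℝ))]
            simp
    obtain ⟨f₀⟩ := G.nonemptyF
    set C : Finset (Σ _ : F, ℕ) := Finset.univ.sigma (fun f => Finset.range (G.len f)) with hC
    have hCmem : ∀ {f : F} {i : ℕ}, i < G.len f → (⟨f, i⟩ : Σ _ : F, ℕ) ∈ C := by
      intro f i hi
      exact Finset.mem_sigma.2 ⟨Finset.mem_univ _, Finset.mem_range.2 hi⟩
    have hNpos : 0 < C.card := Finset.card_pos.2 ⟨⟨f₀, 0⟩, hCmem (G.len_pos f₀)⟩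
    have hN0 : (0 : ℝ) < (C.card : ℝ) := by exact_mod_cast hNpos
    refine ⟨fun f i => (∑ c ∈ C, ωc c f i) / (C.card : ℝ), ?_, ?_, ?_⟩
    · intro f i hi
      apply div_pos _ hN0
      refine Finset.sum_pos' (fun c _ => hnn c f i)
        ⟨⟨f, i⟩, hCmem (Finset.mem_range.1 hi), ?_⟩
      have hcc : G.wv f i = σ ⟨f, i⟩ f := (hfix ⟨f, i⟩).symm
      simp only [hωc, if_pos hcc]
      have := hmpos ⟨f, i⟩ f
      positivity
    · intro f
      rw [← Finset.sum_div, Finset.sum_comm,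
        Finset.sum_congr rfl (fun c _ => hfs c f), Finset.sum_const, nsmul_eq_mul, mul_one,
        div_self hN0.ne']
    · intro v
      have step : ∀ f : F,
          ∑ i ∈ (Finset.range (G.len f)).filter (fun i => G.wv f i = v),
            (∑ c ∈ C, ωc c f i) / (C.card : ℝ)
          = (∑ c ∈ C, ∑ i ∈ (Finset.range (G.len f)).filter (fun i => G.wv f i = v),
              ωc c f i) / (C.card : ℝ) := by
        intro f
        rw [← Finset.sum_div, Finset.sum_comm]
      rw [Finset.sum_congr rfl (fun f _ => step f), ← Finset.sum_div, Finset.sum_comm,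
        Finset.sum_congr rfl (fun c _ => hvs c v), Finset.sum_const, nsmul_eq_mul, mul_one,
        div_self hN0.ne']
end

section
/- A system of linear equations Mx = b with the constraint x > 0 (componentwise strict) has a solution if and only if there is no vector y with y^T M ≥ 0 componentwise, y^T b ≤ 0, and at least one of these inequalities strict. -/
open Matrix

/-- Homogeneous Stiemke: if there is no `y` with `y ᵥ* A ≥ 0` and some coordinate
positive, then `A x = 0` has a strictly positive solution. -/
lemma stiemke_homog (m k : ℕ) (A : Matrix (Fin m) (Fin (k + 1)) ℝ)
    (h : ¬ ∃ y : Fin m → ℝ, (∀ j, 0 ≤ vecMul y A j) ∧ (∃ j, 0 < vecMul y A j)) :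
    ∃ x : Fin (k + 1) → ℝ, A.mulVec x = 0 ∧ ∀ j, 0 < x j := by
  set R : Submodule ℝ (Fin (k + 1) → ℝ) := LinearMap.range A.vecMulLinear with hRdef
  have hRclosed : IsClosed (R : Set (Fin (k + 1) → ℝ)) := R.closed_of_finiteDimensional
  have hdisj : Disjoint (R : Set (Fin (k + 1) → ℝ)) (stdSimplex ℝ (Fin (k + 1))) := by
    rw [Set.disjoint_left]
    rintro z ⟨y, rfl⟩ ⟨hz0, hz1⟩
    apply h
    refine ⟨y, fun j => hz0 j, ?_⟩
    by_contra hno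
    push_neg at hno
    have : ∑ j, (A.vecMulLinear y) j ≤ 0 := Finset.sum_nonpos fun j _ => hno j
    rw [show (A.vecMulLinear y) = vecMul y A from rfl] at hz1
    simp only [Matrix.vecMulLinear_apply] at this hz1
    rw [hz1] at this; linarith
  obtain ⟨f, u, v, hfu, huv, hfv⟩ := geometric_hahn_banach_closed_compact
    R.convex hRclosed (convex_stdSimplex ℝ _) (isCompact_stdSimplex _ _) hdisj
  -- f vanishes on R
  have hf0 : ∀ r ∈ R, f r = 0 := by
    intro r hr
    rcases lt_trichotomy (f r) 0 with hlt | he | hgt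
    · have hmem := R.smul_mem ((u + |u| + 1) / f r) hr
      have := hfu _ hmem
      rw [_root_.map_smul, smul_eq_mul, div_mul_cancel₀ _ hlt.ne] at this
      have hau := abs_nonneg u
      linarith
    · exact he
    · have hmem := R.smul_mem ((u + |u| + 1) / f r) hr
      have := hfu _ hmem
      rw [_root_.map_smul, smul_eq_mul, div_mul_cancel₀ _ hgt.ne'] at this
      have hau := abs_nonneg u
      linarith
  have hupos : 0 < u := by
    have := hfu 0 R.zero_mem
    simpa using this
  -- expansion of f in coordinates
  have hfx : ∀ z : Fin (k + 1) → ℝ, f z = ∑ j, z j * f (Pi.single j 1) := by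
    intro z
    have hz : z = ∑ j, z j • (Pi.single j 1 : Fin (k + 1) → ℝ) := by
      funext j'
      simp [Pi.single_apply]
    conv_lhs => rw [hz]
    rw [map_sum]
    simp [smul_eq_mul]
  refine ⟨fun j => f (Pi.single j 1), ?_, fun j => ?_⟩
  · funext i
    have hrow : (fun j => A i j) ∈ R := by
      refine ⟨Pi.single i 1, ?_⟩
      funext j
      simp [Matrix.vecMulLinear_apply, vecMul, dotProduct, Pi.single_apply, ite_mul]
    have h1 : A.mulVec (fun j => f (Pi.single j 1)) i = f (fun j => A i j) := by
      rw [hfx (fun j => A i j)]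
      simp [mulVec, dotProduct]
    rw [Pi.zero_apply, h1]
    exact hf0 _ hrow
  · exact lt_trans (lt_trans hupos huv) (hfv _ (single_mem_stdSimplex (𝕜 := ℝ) j))

open Matrix in
/-- **Stiemke's theorem of the alternative.** The system `M x = b`, `x > 0`
(componentwise strict) has a solution iff there is no vector `y` with
`yᵀM ≥ 0` componentwise, `yᵀb ≤ 0`, and at least one of these inequalities
strict. -/
theorem stiemke_alternative (m n : ℕ) (M : Matrix (Fin m) (Fin n) ℝ) (b : Fin m → ℝ) :
    (∃ x : Fin n → ℝ, M.mulVec x = b ∧ ∀ j, 0 < x j) ↔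
    ¬ ∃ y : Fin m → ℝ,
        (∀ j, 0 ≤ Matrix.vecMul y M j) ∧ dotProduct y b ≤ 0 ∧
        ((∃ j, 0 < Matrix.vecMul y M j) ∨ dotProduct y b < 0) := by
  constructor
  · rintro ⟨x, hMx, hx⟩ ⟨y, h1, h2, h3⟩
    have key : dotProduct (vecMul y M) x = dotProduct y b := by
      rw [← hMx, dotProduct_mulVec]
    have hnn : (0 : ℝ) ≤ dotProduct (vecMul y M) x :=
      Finset.sum_nonneg fun j _ => mul_nonneg (h1 j) (hx j).le
    rcases h3 with ⟨j0, hj0⟩ | hlt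
    · have hpos : (0 : ℝ) < dotProduct (vecMul y M) x :=
        Finset.sum_pos' (fun j _ => mul_nonneg (h1 j) (hx j).le)
          ⟨j0, Finset.mem_univ _, mul_pos hj0 (hx j0)⟩
      linarith
    · linarith
  · intro hcon
    set A : Matrix (Fin m) (Fin (n + 1)) ℝ :=
      Matrix.of (fun i => Fin.snoc (fun j => M i j) (-b i)) with hAdef
    have hvm : ∀ y : Fin m → ℝ,
        vecMul y A = Fin.snoc (vecMul y M) (-(dotProduct y b)) := by
      intro y
      funext j
      refine Fin.lastCases ?_ (fun j' => ?_) j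
      · simp [vecMul, dotProduct, hAdef, Fin.snoc_last, mul_neg, ← Finset.sum_neg_distrib]
      · simp [vecMul, dotProduct, hAdef, Fin.snoc_castSucc]
    have hyp : ¬ ∃ y : Fin m → ℝ,
        (∀ j, 0 ≤ vecMul y A j) ∧ (∃ j, 0 < vecMul y A j) := by
      rintro ⟨y, hy1, j, hyj⟩
      refine hcon ⟨y, fun j' => ?_, ?_, ?_⟩
      · have := hy1 j'.castSucc
        rwa [hvm, Fin.snoc_castSucc] at this
      · have := hy1 (Fin.last n)
        rw [hvm, Fin.snoc_last] at this
        linarith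
      · rw [hvm] at hyj
        rcases Fin.eq_castSucc_or_eq_last j with ⟨j', rfl⟩ | rfl
        · left
          exact ⟨j', by rwa [Fin.snoc_castSucc] at hyj⟩
        · right
          rw [Fin.snoc_last] at hyj
          linarith
    obtain ⟨x', hAx', hx'⟩ := stiemke_homog m n A hyp
    set t := x' (Fin.last n) with htdef
    have ht : 0 < t := hx' _
    refine ⟨fun j => x' j.castSucc / t, ?_, fun j => div_pos (hx' _) ht⟩
    funext i
    have h0 : (∑ j : Fin n, M i j * x' j.castSucc) + (-b i) * t = 0 := by
      have hi := congrFun hAx' i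
      simp only [mulVec, dotProduct, Pi.zero_apply] at hi
      rw [Fin.sum_univ_castSucc] at hi
      simpa [hAdef, Fin.snoc_castSucc, Fin.snoc_last, ← htdef] using hi
    have hsum : ∑ j : Fin n, M i j * x' j.castSucc = b i * t := by linarith
    have hmv : M.mulVec (fun j => x' j.castSucc / t) i
        = (∑ j : Fin n, M i j * x' j.castSucc) / t := by
      simp [mulVec, dotProduct, Finset.sum_div, mul_div_assoc]
    rw [hmv, hsum, mul_div_assoc, div_self ht.ne', mul_one]
end

section
/- For a cellularly embedded toroidal graph of order 3 (3 vertices, 6 edges, 3 faces, loopless), the Euler property implies the Angle property. -/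
section Aux
open Finset

lemma three_elems {α : Type} [Fintype α] [DecidableEq α] (h : Fintype.card α = 3)
    (a b : α) (hab : a ≠ b) : ∃ c, c ≠ a ∧ c ≠ b ∧ ∀ x, x = a ∨ x = b ∨ x = c := by
  have hcard : ((Finset.univ.erase b).erase a).card = 1 := by
    rw [Finset.card_erase_of_mem (Finset.mem_erase.2 ⟨hab, Finset.mem_univ a⟩),
        Finset.card_erase_of_mem (Finset.mem_univ b), Finset.card_univ, h]
  obtain ⟨c, hc⟩ := Finset.card_eq_one.mp hcard
  have hcmem : c ∈ (Finset.univ.erase b).erase a := hc ▸ Finset.mem_singleton_self c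
  rw [Finset.mem_erase, Finset.mem_erase] at hcmem
  refine ⟨c, hcmem.1, hcmem.2.1, fun x => ?_⟩
  by_cases hx1 : x = a; · exact Or.inl hx1
  by_cases hx2 : x = b; · exact Or.inr (Or.inl hx2)
  have : x ∈ (Finset.univ.erase b).erase a :=
    Finset.mem_erase.2 ⟨hx1, Finset.mem_erase.2 ⟨hx2, Finset.mem_univ x⟩⟩
  rw [hc, Finset.mem_singleton] at this
  exact Or.inr (Or.inr this)

variable {V E F : Type} [Fintype V] [Fintype E] [Fintype F]
    [DecidableEq V] [DecidableEq E] [DecidableEq F] (G : TorusGraph 3 V E F)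

lemma tg_wv_mem {f : F} {i : ℕ} (hi : i < G.len f) : G.wv f i ∈ G.faceVerts f :=
  Finset.mem_image.2 ⟨i, Finset.mem_range.2 hi, rfl⟩

lemma tg_wv_succ_mem {f : F} {i : ℕ} (hi : i < G.len f) : G.wv f (i + 1) ∈ G.faceVerts f := by
  rcases lt_or_eq_of_le (Nat.succ_le_of_lt hi) with h | h
  · exact tg_wv_mem G h
  · have h' : i + 1 = 0 + G.len f := by omega
    rw [h', G.wv_periodic]
    exact tg_wv_mem G (G.len_pos f)

lemma tg_wv01 (f : F) : G.wv f 0 ≠ G.wv f 1 := by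
  have h2 := G.loopless (G.we f 0)
  rw [G.walk_ends f 0, Sym2.mk_isDiag_iff] at h2
  exact h2

lemma tg_two_in_face (f : F) :
    ∃ a b, a ≠ b ∧ a ∈ G.faceVerts f ∧ b ∈ G.faceVerts f := by
  have h2 : 2 ≤ G.len f := by
    by_contra h
    have h1 : G.len f = 1 := by have := G.len_pos f; omega
    have := G.wv_periodic f 0
    rw [h1] at this
    exact tg_wv01 G f (by simpa using this.symm)
  exact ⟨_, _, tg_wv01 G f, tg_wv_mem G (G.len_pos f), tg_wv_mem G (by omega)⟩

lemma tg_not_in_walk {f : F} {v : V} (hv : v ∉ G.faceVerts f) {e : E} (he : v ∈ G.ends e) :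
    ((Finset.range (G.len f)).filter (fun i => G.we f i = e)).card = 0 := by
  rw [Finset.card_eq_zero, Finset.filter_eq_empty_iff]
  intro i hi hcon
  rw [Finset.mem_range] at hi
  have hwe := G.walk_ends f i
  rw [hcon] at hwe
  rw [hwe, Sym2.mem_iff] at he
  rcases he with h | h
  · exact hv (h ▸ tg_wv_mem G hi)
  · exact hv (h ▸ tg_wv_succ_mem G hi)

lemma tg_exists_edge (v : V) : ∃ e, v ∈ G.ends e := by
  have hgt : 1 < Fintype.card V := by rw [G.card_V]; norm_num
  obtain ⟨w, hw⟩ := Fintype.exists_ne_of_one_lt_card hgt v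
  obtain ⟨p⟩ := G.connected.preconnected v w
  cases p with
  | nil => exact absurd rfl hw
  | cons h' p' =>
    rw [SimpleGraph.fromRel_adj] at h'
    rcases h'.2 with ⟨e, he⟩ | ⟨e, he⟩
    · exact ⟨e, by rw [he]; exact Sym2.mem_mk_left _ _⟩
    · exact ⟨e, by rw [he]; exact Sym2.mem_mk_right _ _⟩

lemma tg_two_faces_cover (hE : G.EulerProp) {f1 f2 : F} (h12 : f1 ≠ f2) (v : V) :
    v ∈ G.faceVerts f1 ∨ v ∈ G.faceVerts f2 := by
  by_contra hcon
  push_neg at hcon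
  obtain ⟨hv1, hv2⟩ := hcon
  obtain ⟨e, he⟩ := tg_exists_edge G v
  obtain ⟨f3, hf31, hf32, hall⟩ := three_elems G.card_F f1 f2 h12
  have hsum := G.edge_twice e
  have huniv : (Finset.univ : Finset F) = {f1, f2, f3} := by
    ext x
    simp only [Finset.mem_univ, true_iff, Finset.mem_insert, Finset.mem_singleton]
    exact hall x
  rw [huniv, Finset.sum_insert (by simp [h12, hf31.symm]),
    Finset.sum_insert (by simp [hf32.symm]), Finset.sum_singleton,
    tg_not_in_walk G hv1 he, tg_not_in_walk G hv2 he] at hsum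
  have h3 : 1 < ((Finset.range (G.len f3)).filter (fun i => G.we f3 i = e)).card := by omega
  obtain ⟨i, hi, j, hj, hij⟩ := Finset.one_lt_card.mp h3
  rw [Finset.mem_filter, Finset.mem_range] at hi hj
  exact hij (hE f3 i hi.1 j hj.1 (hi.2.trans hj.2.symm))

lemma tg_matching (hE : G.EulerProp) (f : F) {v : V} (hv : v ∈ G.faceVerts f) :
    ∃ σ : F ≃ V, (∀ f', σ f' ∈ G.faceVerts f') ∧ σ f = v := by
  obtain ⟨b0, hb0⟩ := Fintype.exists_ne_of_one_lt_card (by rw [G.card_F]; norm_num) f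
  obtain ⟨c0, hc0f, hc0b, hallF⟩ := three_elems G.card_F f b0 (Ne.symm hb0)
  obtain ⟨v2, hv2⟩ := Fintype.exists_ne_of_one_lt_card (by rw [G.card_V]; norm_num) v
  obtain ⟨v3, hv3v, hv3v2, hallV⟩ := three_elems G.card_V v v2 (Ne.symm hv2)
  have hbc : b0 ≠ c0 := Ne.symm hc0b
  have hnot : ∀ g : F, v2 ∈ G.faceVerts g ∨ v3 ∈ G.faceVerts g := by
    intro g
    by_contra hcc
    push_neg at hcc
    obtain ⟨a, b, hab, ha, hb⟩ := tg_two_in_face G g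
    have ha' : a = v := by
      rcases hallV a with h | h | h
      · exact h
      · exact absurd (h ▸ ha) hcc.1
      · exact absurd (h ▸ ha) hcc.2
    have hb' : b = v := by
      rcases hallV b with h | h | h
      · exact h
      · exact absurd (h ▸ hb) hcc.1
      · exact absurd (h ▸ hb) hcc.2
    exact hab (ha'.trans hb'.symm)
  have key : ∃ a2 a3 : V, a2 ≠ a3 ∧ a2 ≠ v ∧ a3 ≠ v ∧
      a2 ∈ G.faceVerts b0 ∧ a3 ∈ G.faceVerts c0 := by
    by_cases h2b : v2 ∈ G.faceVerts b0
    · by_cases h3c : v3 ∈ G.faceVerts c0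
      · exact ⟨v2, v3, Ne.symm hv3v2, hv2, hv3v, h2b, h3c⟩
      · have h3b : v3 ∈ G.faceVerts b0 :=
          (tg_two_faces_cover G hE hbc v3).resolve_right h3c
        have h2c : v2 ∈ G.faceVerts c0 := (hnot c0).resolve_right h3c
        exact ⟨v3, v2, hv3v2, hv3v, hv2, h3b, h2c⟩
    · have h2c : v2 ∈ G.faceVerts c0 :=
        (tg_two_faces_cover G hE hbc v2).resolve_left h2b
      have h3b : v3 ∈ G.faceVerts b0 := (hnot b0).resolve_left h2b
      exact ⟨v3, v2, hv3v2, hv3v, hv2, h3b, h2c⟩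
  obtain ⟨a2, a3, ha23, ha2v, ha3v, hma2, hma3⟩ := key
  have hfb : f ≠ b0 := Ne.symm hb0
  have hfc : f ≠ c0 := Ne.symm hc0f
  set g : F → V := fun x => if x = f then v else if x = b0 then a2 else a3 with hg
  have hgf : g f = v := by simp [hg]
  have hgb : g b0 = a2 := by simp [hg, hb0]
  have hgc : g c0 = a3 := by simp [hg, hc0f, hc0b]
  have hginj : Function.Injective g := by
    intro x y hxy
    rcases hallF x with hx | hx | hx <;> rcases hallF y with hy | hy | hy <;>
      subst hx <;> subst hy <;>
      simp only [hgf, hgb, hgc] at hxy <;> first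
        | rfl
        | exact absurd hxy (by tauto)
        | exact absurd hxy.symm (by tauto)
  have hbij : Function.Bijective g :=
    (Fintype.bijective_iff_injective_and_card g).mpr ⟨hginj, by rw [G.card_F, G.card_V]⟩
  refine ⟨Equiv.ofBijective g hbij, ?_, hgf⟩
  intro f'
  show g f' ∈ _
  rcases hallF f' with h | h | h <;> subst h
  · rw [hgf]; exact hv
  · rw [hgb]; exact hma2
  · rw [hgc]; exact hma3

end Aux

section Weights
open Finset

variable {V E F : Type} [Fintype V] [Fintype E] [Fintype F]
    [DecidableEq V] [DecidableEq E] [DecidableEq F] (G : TorusGraph 3 V E F)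

/-- corner multiplicity of vertex `v` in face `f` -/
def tgM (f : F) (v : V) : ℕ :=
  ((Finset.range (G.len f)).filter (fun i => G.wv f i = v)).card

/-- systems of distinct representatives -/
def tgGood : Finset (F ≃ V) :=
  Finset.univ.filter (fun σ => ∀ f', σ f' ∈ G.faceVerts f')

/-- averaged doubly stochastic matrix -/
noncomputable def tgD (f : F) (v : V) : ℝ :=
  (((tgGood G).filter (fun σ => σ f = v)).card : ℝ) / ((tgGood G).card : ℝ)

lemma tgM_pos_iff {f : F} {v : V} : v ∈ G.faceVerts f ↔ 0 < tgM G f v := by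
  rw [tgM, Finset.card_pos, Finset.filter_nonempty_iff]
  simp [TorusGraph.faceVerts, Finset.mem_image]

lemma tgGood_card_pos (hE : G.EulerProp) : 0 < (tgGood G).card := by
  have hFne : Nonempty F := Fintype.card_pos_iff.mp (by rw [G.card_F]; norm_num)
  obtain ⟨f0⟩ := hFne
  obtain ⟨σ, hσ, -⟩ := tg_matching G hE f0 (tg_wv_mem G (G.len_pos f0))
  exact Finset.card_pos.2 ⟨σ, Finset.mem_filter.2 ⟨Finset.mem_univ _, hσ⟩⟩

lemma tgD_pos (hE : G.EulerProp) {f : F} {v : V} (hv : v ∈ G.faceVerts f) :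
    0 < tgD G f v := by
  obtain ⟨σ, hσ1, hσ2⟩ := tg_matching G hE f hv
  apply div_pos _ (by exact_mod_cast tgGood_card_pos G hE)
  exact_mod_cast Finset.card_pos.2
    ⟨σ, Finset.mem_filter.2 ⟨Finset.mem_filter.2 ⟨Finset.mem_univ _, hσ1⟩, hσ2⟩⟩

lemma tgD_fiber_empty {f : F} {v : V} (hv : v ∉ G.faceVerts f) :
    (tgGood G).filter (fun σ => σ f = v) = ∅ := by
  rw [Finset.filter_eq_empty_iff]
  intro σ hσ hc
  exact hv (hc ▸ (Finset.mem_filter.1 hσ).2 f)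

lemma tg_sum_D_face (hE : G.EulerProp) (f : F) :
    ∑ v ∈ G.faceVerts f, tgD G f v = 1 := by
  have hN : ((tgGood G).card : ℝ) ≠ 0 := by
    exact_mod_cast (tgGood_card_pos G hE).ne'
  rw [show (∑ v ∈ G.faceVerts f, tgD G f v) =
      (∑ v ∈ G.faceVerts f, (((tgGood G).filter (fun σ => σ f = v)).card : ℝ))
        / ((tgGood G).card : ℝ) by rw [Finset.sum_div]; rfl]
  have h1 : (tgGood G).card = ∑ v ∈ Finset.univ, ((tgGood G).filter (fun σ => σ f = v)).card :=
    Finset.card_eq_sum_card_fiberwise (fun σ _ => Finset.mem_univ _)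
  have h2 : ∑ v ∈ Finset.univ, ((tgGood G).filter (fun σ => σ f = v)).card
      = ∑ v ∈ G.faceVerts f, ((tgGood G).filter (fun σ => σ f = v)).card := by
    refine (Finset.sum_subset (Finset.subset_univ _) ?_).symm
    intro v _ hv
    rw [tgD_fiber_empty G hv, Finset.card_empty]
  have h3 : ∑ v ∈ G.faceVerts f, (((tgGood G).filter (fun σ => σ f = v)).card : ℝ)
      = ((tgGood G).card : ℝ) := by
    rw [h1, h2]; push_cast; rfl
  rw [h3, div_self hN]

lemma tg_sum_D_vertex (hE : G.EulerProp) (v : V) :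
    ∑ f : F, tgD G f v = 1 := by
  have hN : ((tgGood G).card : ℝ) ≠ 0 := by
    exact_mod_cast (tgGood_card_pos G hE).ne'
  rw [show (∑ f : F, tgD G f v) =
      (∑ f : F, (((tgGood G).filter (fun σ => σ f = v)).card : ℝ))
        / ((tgGood G).card : ℝ) by rw [Finset.sum_div]; rfl]
  have h1 : ∑ f : F, ((tgGood G).filter (fun σ => σ f = v)).card = (tgGood G).card := by
    simp_rw [Finset.card_filter]
    rw [Finset.sum_comm]
    have h2 : ∀ σ : F ≃ V, (∑ f : F, if σ f = v then 1 else 0) = 1 := by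
      intro σ
      have h3 : ∀ f : F, (σ f = v) = (f = σ.symm v) := fun f => by
        rw [eq_iff_iff]; exact σ.apply_eq_iff_eq_symm_apply
      simp_rw [h3]
      simp
    rw [Finset.sum_congr rfl (fun σ _ => h2 σ), Finset.sum_const, smul_eq_mul, mul_one]
  have h4 : ∑ f : F, (((tgGood G).filter (fun σ => σ f = v)).card : ℝ)
      = ((tgGood G).card : ℝ) := by exact_mod_cast congrArg (Nat.cast (R := ℝ)) h1
  rw [h4, div_self hN]

end Weights


open TorusGraph in
/-- For a cellularly embedded toroidal graph of order 3 (3 vertices, 6 edges,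
3 faces, loopless), the Euler property implies the Angle property. -/
theorem order_three_euler_implies_angle {V E F : Type}
    [Fintype V] [Fintype E] [Fintype F]
    [DecidableEq V] [DecidableEq E] [DecidableEq F]
    (G : TorusGraph 3 V E F) (hE : G.EulerProp) :
    G.AngleProp := by
  exact ⟨fun f i => tgD G f (G.wv f i) / (tgM G f (G.wv f i) : ℝ), by
    intro f i hi
    rw [Finset.mem_range] at hi
    have hv := tg_wv_mem G hi
    exact div_pos (tgD_pos G hE hv) (by exact_mod_cast (tgM_pos_iff G).1 hv), by
    intro f
    rw [Finset.sum_comp (fun v => tgD G f v / (tgM G f v : ℝ)) (G.wv f)]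
    have himage : (Finset.range (G.len f)).image (G.wv f) = G.faceVerts f := rfl
    rw [himage]
    have hterm : ∀ v ∈ G.faceVerts f,
        ((Finset.range (G.len f)).filter (fun i => G.wv f i = v)).card
          • (tgD G f v / (tgM G f v : ℝ)) = tgD G f v := by
      intro v hv
      have h0 : (tgM G f v : ℝ) ≠ 0 := by
        exact_mod_cast ((tgM_pos_iff G).1 hv).ne'
      have hcard : ((Finset.range (G.len f)).filter (fun i => G.wv f i = v)).card
          = tgM G f v := rfl
      rw [hcard, nsmul_eq_mul, mul_comm, div_mul_cancel₀ _ h0]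
    rw [Finset.sum_congr rfl hterm]
    exact tg_sum_D_face G hE f, by
    intro v
    have hinner : ∀ f : F,
        ∑ i ∈ (Finset.range (G.len f)).filter (fun i => G.wv f i = v),
          (tgD G f (G.wv f i) / (tgM G f (G.wv f i) : ℝ)) = tgD G f v := by
      intro f
      have hconst : ∀ i ∈ (Finset.range (G.len f)).filter (fun i => G.wv f i = v),
          tgD G f (G.wv f i) / (tgM G f (G.wv f i) : ℝ)
            = tgD G f v / (tgM G f v : ℝ) := by
        intro i hi
        rw [(Finset.mem_filter.1 hi).2]
      rw [Finset.sum_congr rfl hconst, Finset.sum_const]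
      have hcard : ((Finset.range (G.len f)).filter (fun i => G.wv f i = v)).card
          = tgM G f v := rfl
      rw [hcard]
      by_cases hv : v ∈ G.faceVerts f
      · have h0 : (tgM G f v : ℝ) ≠ 0 := by
          exact_mod_cast ((tgM_pos_iff G).1 hv).ne'
        rw [nsmul_eq_mul, mul_comm, div_mul_cancel₀ _ h0]
      · have hm0 : tgM G f v = 0 := by
          by_contra h
          exact hv ((tgM_pos_iff G).2 (Nat.pos_of_ne_zero h))
        have hD0 : tgD G f v = 0 := by
          rw [tgD, tgD_fiber_empty G hv]; simp
        rw [hm0, hD0, zero_smul]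
    rw [Finset.sum_congr rfl (fun f _ => hinner f)]
    exact tg_sum_D_vertex G hE v⟩
end

section
/- If a cellularly embedded toroidal graph G with r vertices, 2r edges and r faces has the Angle property, then for every nonempty proper subset J of faces, the following two inequalities are equivalent to each other: |Int G(J)| < |J| and |J| < |V(G(J))|; that is, for such G, one of the two Hall-type inequalities implies the other. -/
open TorusGraph in
/-- If a cellularly embedded toroidal graph with `r` vertices and `2r` edges has
the Angle property, then for every nonempty proper subset `J` of faces the two
Hall-type inequalities `|Int G(J)| < |J|` and `|J| < |V(G(J))|` are equivalent. -/
theorem hall_inequalities_equivalent {r : ℕ} {V E F : Type}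
    [Fintype V] [Fintype E] [Fintype F]
    [DecidableEq V] [DecidableEq E] [DecidableEq F]
    (G : TorusGraph r V E F) (hA : G.AngleProp) :
    ∀ J : Finset F, J.Nonempty → J ≠ Finset.univ →
      ((G.IntJ J).card < J.card ↔ J.card < (G.VJ J).card) := by
  classical
  obtain ⟨ω, hpos, hface, hvert⟩ := hA
  intro J _ _
  -- the mass at vertex `v` coming from corners of faces in `J`
  set t : V → ℝ := fun v => ∑ f ∈ J,
      ∑ i ∈ (Finset.range (G.len f)).filter (fun i => G.wv f i = v), ω f i with ht
  have hinner_nonneg : ∀ (f : F) (v : V),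
      0 ≤ ∑ i ∈ (Finset.range (G.len f)).filter (fun i => G.wv f i = v), ω f i := by
    intro f v
    exact Finset.sum_nonneg fun i hi => (hpos f i (Finset.mem_filter.mp hi).1).le
  have hinner_pos : ∀ (f : F) (v : V), v ∈ G.faceVerts f →
      0 < ∑ i ∈ (Finset.range (G.len f)).filter (fun i => G.wv f i = v), ω f i := by
    intro f v hv
    obtain ⟨i, hi, hiv⟩ := Finset.mem_image.mp hv
    refine Finset.sum_pos' (fun j hj => (hpos f j (Finset.mem_filter.mp hj).1).le)
      ⟨i, Finset.mem_filter.mpr ⟨hi, hiv⟩, hpos f i hi⟩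
  have hmemVJ : ∀ (f : F), f ∈ J → ∀ i ∈ Finset.range (G.len f), G.wv f i ∈ G.VJ J := by
    intro f hf i hi
    exact Finset.mem_biUnion.mpr ⟨f, hf, Finset.mem_image_of_mem _ hi⟩
  -- total mass over `VJ` is `|J|`
  have hsumJ : ∑ v ∈ G.VJ J, t v = (J.card : ℝ) := by
    rw [ht]
    rw [Finset.sum_comm]
    have : ∀ f ∈ J, (∑ v ∈ G.VJ J,
        ∑ i ∈ (Finset.range (G.len f)).filter (fun i => G.wv f i = v), ω f i) = 1 := by
      intro f hf
      rw [Finset.sum_fiberwise_of_maps_to (hmemVJ f hf)]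
      exact hface f
    rw [Finset.sum_congr rfl this]
    simp
  -- mass `1` at interior vertices
  have hInt : ∀ v ∈ G.IntJ J, t v = 1 := by
    intro v hv
    obtain ⟨hvVJ, hvall⟩ := Finset.mem_filter.mp hv
    have : t v = ∑ f : F,
        ∑ i ∈ (Finset.range (G.len f)).filter (fun i => G.wv f i = v), ω f i := by
      rw [ht]
      refine Finset.sum_subset (Finset.subset_univ J) ?_
      intro f _ hfJ
      refine Finset.sum_eq_zero ?_
      intro i hi
      obtain ⟨hir, hiv⟩ := Finset.mem_filter.mp hi
      exact absurd (hvall f (Finset.mem_image.mpr ⟨i, hir, hiv⟩)) hfJ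
    rw [this, hvert v]
  -- positive mass at every vertex of `VJ`
  have hVJpos : ∀ v ∈ G.VJ J, 0 < t v := by
    intro v hv
    obtain ⟨f, hf, hvf⟩ := Finset.mem_biUnion.mp hv
    rw [ht]
    exact Finset.sum_pos' (fun g _ => hinner_nonneg g v) ⟨f, hf, hinner_pos f v hvf⟩
  -- mass strictly less than `1` at boundary vertices
  have hBlt : ∀ v ∈ G.VJ J \ G.IntJ J, t v < 1 := by
    intro v hv
    obtain ⟨hvVJ, hvni⟩ := Finset.mem_sdiff.mp hv
    have hex : ∃ f, v ∈ G.faceVerts f ∧ f ∉ J := by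
      by_contra h
      push_neg at h
      exact hvni (Finset.mem_filter.mpr ⟨hvVJ, fun f hf => h f hf⟩)
    obtain ⟨f₀, hf₀v, hf₀J⟩ := hex
    have h1 : (∑ f ∈ insert f₀ J,
        ∑ i ∈ (Finset.range (G.len f)).filter (fun i => G.wv f i = v), ω f i) ≤
        ∑ f : F, ∑ i ∈ (Finset.range (G.len f)).filter (fun i => G.wv f i = v), ω f i :=
      Finset.sum_le_sum_of_subset_of_nonneg (Finset.subset_univ _)
        (fun f _ _ => hinner_nonneg f v)
    rw [Finset.sum_insert hf₀J, hvert v] at h1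
    have h2 := hinner_pos f₀ v hf₀v
    rw [ht]
    linarith
  have hsub : G.IntJ J ⊆ G.VJ J := Finset.filter_subset _ _
  have hsplit : (∑ v ∈ G.VJ J \ G.IntJ J, t v) + ∑ v ∈ G.IntJ J, t v = ∑ v ∈ G.VJ J, t v :=
    Finset.sum_sdiff hsub
  have hIntsum : ∑ v ∈ G.IntJ J, t v = ((G.IntJ J).card : ℝ) := by
    rw [Finset.sum_congr rfl hInt]; simp
  have hcard : (G.VJ J \ G.IntJ J).card + (G.IntJ J).card = (G.VJ J).card :=
    Finset.card_sdiff_add_card_eq_card hsub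
  by_cases hB : (G.VJ J \ G.IntJ J).Nonempty
  · -- both inequalities hold
    have hSpos : 0 < ∑ v ∈ G.VJ J \ G.IntJ J, t v :=
      Finset.sum_pos (fun v hv => hVJpos v (Finset.mem_sdiff.mp hv).1) hB
    have hSlt : (∑ v ∈ G.VJ J \ G.IntJ J, t v) < ((G.VJ J \ G.IntJ J).card : ℝ) := by
      have := Finset.sum_lt_sum_of_nonempty hB (f := t) (g := fun _ => (1 : ℝ)) hBlt
      simpa using this
    have h1 : ((G.IntJ J).card : ℝ) < (J.card : ℝ) := by
      rw [← hsumJ, ← hsplit, hIntsum]; linarith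
    have h2 : (J.card : ℝ) < ((G.VJ J).card : ℝ) := by
      have hc : ((G.VJ J).card : ℝ) = ((G.VJ J \ G.IntJ J).card : ℝ) + ((G.IntJ J).card : ℝ) := by
        exact_mod_cast (congrArg (Nat.cast : ℕ → ℝ) hcard).symm
      rw [← hsumJ, ← hsplit, hIntsum, hc]
      linarith
    exact ⟨fun _ => by exact_mod_cast h2, fun _ => by exact_mod_cast h1⟩
  · -- both inequalities fail
    rw [Finset.not_nonempty_iff_eq_empty] at hB
    have hVeq : G.VJ J = G.IntJ J := by
      rw [Finset.sdiff_eq_empty_iff_subset] at hB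
      exact Finset.Subset.antisymm hB hsub
    have hJeq : (J.card : ℝ) = ((G.IntJ J).card : ℝ) := by
      rw [← hsumJ, ← hsplit, hIntsum, hB]; simp
    have hJeq' : J.card = (G.IntJ J).card := by exact_mod_cast hJeq
    constructor
    · intro h; omega
    · intro h; rw [hVeq] at h; omega
end
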